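/- If 1 ≤ D ≤ Σ_{k=0}^{K-1} N^{-k}, then (N−1)(D−1)/(N^K−N) ≤ (1−(N−1)(D−1))/N; consequently the distribution p* satisfies max_{m ∈ {1,…,N^K}} p*_m = (1−(N−1)(D−1))/N, i.e., the optimal solution for finite Rényi order α also attains the minimum of max_m p_m over feasible distributions (the order-∞ problem). -/

import Mathlib

open Finset Real

/-- Download cost of option `m` (0-indexed: options `1,…,N` of the paper are `m < N`)
in the symmetric TSC scheme with `N` databases and `K` messages. -/
noncomputable def tscCost (N m : ℕ) : ℝ := if m < N then (N : ℝ) - 1 else (N : ℝ)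

/-- `p` is a feasible query distribution for the symmetric TSC scheme with expected
normalized download cost `D`. -/
def TSCFeasible (N K : ℕ) (D : ℝ) (p : ℕ → ℝ) : Prop :=
  (∀ m ∈ Finset.range (N ^ K), 0 ≤ p m) ∧
  (∑ m ∈ Finset.range (N ^ K), p m = 1) ∧
  (1 / ((N : ℝ) - 1)) * (∑ m ∈ Finset.range (N ^ K), p m * tscCost N m) = D

/-- The optimal distribution `p*` for the symmetric TSC scheme. -/
noncomputable def tscOpt (N K : ℕ) (D : ℝ) (m : ℕ) : ℝ :=
  if m < N then (1 - ((N : ℝ) - 1) * (D - 1)) / N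
  else ((N : ℝ) - 1) * (D - 1) / ((N : ℝ) ^ K - (N : ℝ))

/-- Download cost of option `m` (0-indexed) in the alternative PIR scheme with
message length `L`. -/
noncomputable def altCost (N L m : ℕ) : ℝ := if m < N then (L : ℝ) else (L : ℝ) + 1

/-- `p` is a feasible query distribution for the alternative PIR scheme
(`M = N (L+1)^(K-1)` options) with expected normalized download cost `D`. -/
def AltFeasible (N K L : ℕ) (D : ℝ) (p : ℕ → ℝ) : Prop :=
  (∀ m ∈ Finset.range (N * (L + 1) ^ (K - 1)), 0 ≤ p m) ∧
  (∑ m ∈ Finset.range (N * (L + 1) ^ (K - 1)), p m = 1) ∧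
  (1 / (L : ℝ)) * (∑ m ∈ Finset.range (N * (L + 1) ^ (K - 1)), p m * altCost N L m) = D

/-- The optimal distribution `q*` for the alternative PIR scheme. -/
noncomputable def altOpt (N K L : ℕ) (D : ℝ) (m : ℕ) : ℝ :=
  if m < N then (1 - (L : ℝ) * (D - 1)) / N
  else (L : ℝ) * (D - 1) / ((N : ℝ) * ((L : ℝ) + 1) ^ (K - 1) - (N : ℝ))

/-- Rényi divergence of order `α` (`0 < α`, `α ≠ 1`) of a distribution `p` on `M`
options from the uniform distribution on those options (natural logarithm). -/
noncomputable def renyiDiv (M : ℕ) (α : ℝ) (p : ℕ → ℝ) : ℝ :=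
  (1 / (α - 1)) * Real.log ((M : ℝ) ^ (α - 1) * ∑ m ∈ Finset.range M, p m ^ α)

/-- Kullback–Leibler divergence of a distribution `p` on `M` options from the uniform
distribution on those options (natural logarithm, with `0 · log 0 = 0`). -/
noncomputable def klDivUnif (M : ℕ) (p : ℕ → ℝ) : ℝ :=
  ∑ m ∈ Finset.range M, p m * Real.log ((M : ℝ) * p m)

/-- The maximum of `p` over the `M` options. -/
noncomputable def maxOver (M : ℕ) (hM : M ≠ 0) (p : ℕ → ℝ) : ℝ :=
  (Finset.range M).sup' (Finset.nonempty_range_iff.mpr hM) p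

lemma split_sum_aux (N K : ℕ) (hNK : N ≤ N^K) (f : ℕ → ℝ) :
    ∑ m ∈ Finset.range (N^K), f m
      = ∑ m ∈ Finset.range N, f m + ∑ m ∈ Finset.Ico N (N^K), f m := by
  rw [Finset.range_eq_Ico, ← Finset.sum_Ico_consecutive _ (Nat.zero_le N) hNK,
    ← Finset.range_eq_Ico]

/-- if `1 ≤ D ≤ ∑_{k<K} N^{-k}`, then
`(N-1)(D-1)/(N^K-N) ≤ (1-(N-1)(D-1))/N`; consequently `p*` satisfies
`max_m p*ₘ = (1-(N-1)(D-1))/N` and also attains the minimum of `max_m pₘ` over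
feasible distributions of the symmetric TSC scheme. -/
theorem tsc_opt_also_solves_infty (N K : ℕ) (hN : 2 ≤ N) (hK : 2 ≤ K) (D : ℝ)
    (hD1 : 1 ≤ D) (hD2 : D ≤ ∑ k ∈ Finset.range K, ((N : ℝ) ^ k)⁻¹) :
    ((N : ℝ) - 1) * (D - 1) / ((N : ℝ) ^ K - N) ≤ (1 - ((N : ℝ) - 1) * (D - 1)) / N ∧
    maxOver (N ^ K) (pow_ne_zero K (show N ≠ 0 by omega)) (tscOpt N K D) =
      (1 - ((N : ℝ) - 1) * (D - 1)) / N ∧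
    TSCFeasible N K D (tscOpt N K D) ∧
    ∀ p : ℕ → ℝ, TSCFeasible N K D p →
      maxOver (N ^ K) (pow_ne_zero K (show N ≠ 0 by omega)) (tscOpt N K D) ≤
        maxOver (N ^ K) (pow_ne_zero K (show N ≠ 0 by omega)) p := by
  have hN1 : (1:ℝ) < (N:ℝ) := by exact_mod_cast hN
  have hN0 : (0:ℝ) < (N:ℝ) := by linarith
  have hNne : (N:ℝ) ≠ 0 := ne_of_gt hN0
  have ht0 : (0:ℝ) < (N:ℝ)^K := by positivity
  have hNK : (N:ℝ) < (N:ℝ)^K := by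
    calc (N:ℝ) = (N:ℝ)^1 := (pow_one _).symm
    _ < (N:ℝ)^K := by
        apply pow_lt_pow_right₀ hN1 (by omega)
  have hNKnat : N ≤ N^K := Nat.le_self_pow (by omega) N
  have htN : (0:ℝ) < (N:ℝ)^K - N := by linarith
  have hinvne : (N:ℝ)⁻¹ ≠ 1 := by
    intro h
    have : (N:ℝ) = 1 := by field_simp at h; linarith
    linarith
  have hgeom : ∑ k ∈ Finset.range K, ((N : ℝ) ^ k)⁻¹
      = (((N:ℝ)⁻¹)^K - 1)/((N:ℝ)⁻¹ - 1) := by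
    simpa [inv_pow] using geom_sum_eq hinvne K
  have h1 : ((N:ℝ)⁻¹)^K * (N:ℝ)^K = 1 := by
    rw [← mul_pow]; simp [inv_mul_cancel₀ hNne]
  -- key inequality: (N-1)(D-1) * N^K ≤ N^K - N
  have hkey : ((N:ℝ)-1)*(D-1)*(N:ℝ)^K ≤ (N:ℝ)^K - N := by
    rw [hgeom] at hD2
    have hneg : (N:ℝ)⁻¹ - 1 < 0 := by
      have : (N:ℝ)⁻¹ < 1 := by
        rw [inv_lt_one_iff₀]; right; exact hN1
      linarith
    rw [le_div_iff_of_neg hneg] at hD2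
    have hmul := mul_le_mul_of_nonneg_right hD2 (le_of_lt (mul_pos ht0 hN0))
    have e0 : ((N:ℝ)⁻¹ - 1) * ((N:ℝ)^K * N) = (N:ℝ)^K - (N:ℝ)^K * N := by
      field_simp
    have e1 : (((N:ℝ)⁻¹)^K - 1) * ((N:ℝ)^K * N) = N - (N:ℝ)^K * N := by
      rw [sub_mul, ← mul_assoc, h1]; ring
    have e0' : D * (((N:ℝ)⁻¹ - 1) * ((N:ℝ)^K * N)) = D * ((N:ℝ)^K - (N:ℝ)^K * N) := by
      rw [e0]
    nlinarith [hmul, e1, e0']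
  have ha0 : 0 ≤ ((N:ℝ)-1)*(D-1) := by nlinarith
  have ha1 : ((N:ℝ)-1)*(D-1) ≤ 1 := by nlinarith
  have goal1 : ((N : ℝ) - 1) * (D - 1) / ((N : ℝ) ^ K - N)
      ≤ (1 - ((N : ℝ) - 1) * (D - 1)) / N := by
    rw [div_le_div_iff₀ htN hN0]
    nlinarith
  have hmem0 : (0:ℕ) ∈ Finset.range (N^K) := by
    simp [Nat.pos_of_ne_zero (pow_ne_zero K (show N ≠ 0 by omega))]
  have h0lt : 0 < N := by omega
  have hmax : maxOver (N ^ K) (pow_ne_zero K (show N ≠ 0 by omega)) (tscOpt N K D) =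
      (1 - ((N : ℝ) - 1) * (D - 1)) / N := by
    apply le_antisymm
    · apply Finset.sup'_le
      intro m _
      unfold tscOpt
      split
      · exact le_refl _
      · exact goal1
    · unfold maxOver
      calc (1 - ((N:ℝ)-1)*(D-1))/N = tscOpt N K D 0 := by simp [tscOpt, h0lt]
        _ ≤ _ := Finset.le_sup' _ hmem0
  have hcard : (Finset.Ico N (N^K)).card = N^K - N := Nat.card_Ico N (N^K)
  have hcardR : ((N^K - N : ℕ) : ℝ) = (N:ℝ)^K - N := by
    push_cast [Nat.cast_sub hNKnat]; ring
  have e_opt1 : ∀ m ∈ Finset.range N, tscOpt N K D m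
      = (1 - ((N:ℝ)-1)*(D-1))/N := fun m hm => by
    simp [tscOpt, Finset.mem_range.mp hm]
  have e_opt2 : ∀ m ∈ Finset.Ico N (N^K), tscOpt N K D m
      = ((N:ℝ)-1)*(D-1)/((N:ℝ)^K - N) := fun m hm => by
    simp [tscOpt, Nat.not_lt.mpr (Finset.mem_Ico.mp hm).1]
  have e_cost1 : ∀ m ∈ Finset.range N, tscOpt N K D m * tscCost N m
      = (1 - ((N:ℝ)-1)*(D-1))/N * ((N:ℝ)-1) := fun m hm => by
    simp [tscOpt, tscCost, Finset.mem_range.mp hm]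
  have e_cost2 : ∀ m ∈ Finset.Ico N (N^K), tscOpt N K D m * tscCost N m
      = ((N:ℝ)-1)*(D-1)/((N:ℝ)^K - N) * N := fun m hm => by
    simp [tscOpt, tscCost, Nat.not_lt.mpr (Finset.mem_Ico.mp hm).1]
  have hN1ne : (N:ℝ) - 1 ≠ 0 := by linarith
  have htNne : (N:ℝ)^K - (N:ℝ) ≠ 0 := ne_of_gt htN
  refine ⟨goal1, hmax, ⟨?_, ?_, ?_⟩, ?_⟩
  · intro m _
    unfold tscOpt
    split
    · apply div_nonneg (by linarith) (le_of_lt hN0)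
    · exact div_nonneg ha0 (le_of_lt htN)
  · rw [split_sum_aux N K hNKnat, Finset.sum_congr rfl e_opt1,
      Finset.sum_congr rfl e_opt2, Finset.sum_const, Finset.sum_const,
      Finset.card_range, hcard, nsmul_eq_mul, nsmul_eq_mul, hcardR]
    field_simp
    ring
  · rw [split_sum_aux N K hNKnat, Finset.sum_congr rfl e_cost1,
      Finset.sum_congr rfl e_cost2, Finset.sum_const, Finset.sum_const,
      Finset.card_range, hcard, nsmul_eq_mul, nsmul_eq_mul, hcardR]
    field_simp
    ring
  · rintro p ⟨hp0, hp1, hp2⟩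
    rw [hmax]
    have hc : ∑ m ∈ Finset.range (N^K), p m * tscCost N m
        = ((N:ℝ)-1) * ∑ m ∈ Finset.range N, p m
          + (N:ℝ) * ∑ m ∈ Finset.Ico N (N^K), p m := by
      rw [split_sum_aux N K hNKnat, Finset.mul_sum, Finset.mul_sum]
      congr 1
      · exact Finset.sum_congr rfl (fun m hm => by
          simp [tscCost, Finset.mem_range.mp hm]; ring)
      · exact Finset.sum_congr rfl (fun m hm => by
          simp [tscCost, Nat.not_lt.mpr (Finset.mem_Ico.mp hm).1]; ring)
    rw [split_sum_aux N K hNKnat] at hp1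
    rw [hc] at hp2
    have hs : ∑ m ∈ Finset.range N, p m = 1 - ((N:ℝ)-1)*(D-1) := by
      field_simp at hp2
      nlinarith [hp2]
    set Mx := maxOver (N ^ K) (pow_ne_zero K (show N ≠ 0 by omega)) p with hMx
    have hle : ∀ m ∈ Finset.range N, p m ≤ Mx := by
      intro m hm
      exact Finset.le_sup' p (Finset.mem_range.mpr
        (lt_of_lt_of_le (Finset.mem_range.mp hm) hNKnat))
    have hsum_le : 1 - ((N:ℝ)-1)*(D-1) ≤ (N:ℝ) * Mx := by
      rw [← hs]
      calc ∑ m ∈ Finset.range N, p m ≤ ∑ m ∈ Finset.range N, Mx :=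
            Finset.sum_le_sum hle
        _ = (N:ℝ) * Mx := by rw [Finset.sum_const, Finset.card_range, nsmul_eq_mul]
    rw [div_le_iff₀ hN0]
    linarith [hsum_le]
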